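/- The 8×8 complex matrix T = S₁⊗S₃⊗S₀ + S₂⊗S₀⊗S₁ + S₃⊗S₂⊗S₁ + S₁⊗S₂⊗S₂ + S₂⊗S₁⊗S₃ + S₃⊗S₃⊗S₃ has Schmidt rank exactly 6. -/
import Mathlib


open Matrix Kronecker Complex

/-- The tripartite Schmidt rank of an 8×8 complex matrix, viewed as a matrix on
ℂ² ⊗ ℂ² ⊗ ℂ² via Kronecker products: the least `r` such that
`U = ∑ j, A j ⊗ₖ (B j ⊗ₖ C j)` with 2×2 matrices `A j`, `B j`, `C j`. -/
noncomputable def sr (U : Matrix (Fin 2 × Fin 2 × Fin 2) (Fin 2 × Fin 2 × Fin 2) ℂ) : ℕ :=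
  sInf {r | ∃ A B C : Fin r → Matrix (Fin 2) (Fin 2) ℂ,
    U = ∑ j, A j ⊗ₖ (B j ⊗ₖ C j)}

def S0 : Matrix (Fin 2) (Fin 2) ℂ := !![1, 0; 0, 0]
def S1 : Matrix (Fin 2) (Fin 2) ℂ := !![0, 1; 0, 0]
def S2 : Matrix (Fin 2) (Fin 2) ℂ := !![0, 0; 1, 0]
def S3 : Matrix (Fin 2) (Fin 2) ℂ := !![0, 0; 0, 1]
def σ1 : Matrix (Fin 2) (Fin 2) ℂ := !![0, 1; 1, 0]
def σ2 : Matrix (Fin 2) (Fin 2) ℂ := !![0, -I; I, 0]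
def σ3 : Matrix (Fin 2) (Fin 2) ℂ := !![1, 0; 0, -1]
def I2 : Matrix (Fin 2) (Fin 2) ℂ := 1

noncomputable def Tmat : Matrix (Fin 2 × Fin 2 × Fin 2) (Fin 2 × Fin 2 × Fin 2) ℂ :=
  S1 ⊗ₖ (S3 ⊗ₖ S0) + S2 ⊗ₖ (S0 ⊗ₖ S1) + S3 ⊗ₖ (S2 ⊗ₖ S1) +
    S1 ⊗ₖ (S2 ⊗ₖ S2) + S2 ⊗ₖ (S1 ⊗ₖ S3) + S3 ⊗ₖ (S3 ⊗ₖ S3)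

/-- `gg B j1 j b` : the cross-elimination of the `b`-coordinates of `B j` against `B j1`,
using the `(0,0)` coordinate. -/
def gg (B : Fin 5 → Matrix (Fin 2) (Fin 2) ℂ) (j1 j : Fin 5) (b : Fin 2 × Fin 2) : ℂ :=
  B j b.1 b.2 * B j1 0 0 - B j1 b.1 b.2 * B j 0 0

/-- Second cross-elimination, against index `j2`, using the `(0,1)` coordinate. -/
def hh (B : Fin 5 → Matrix (Fin 2) (Fin 2) ℂ) (j1 j2 j : Fin 5) (b : Fin 2 × Fin 2) : ℂ :=
  gg B j1 j b * gg B j1 j2 (0, 1) - gg B j1 j2 b * gg B j1 j (0, 1)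

lemma core (A B C : Fin 5 → Matrix (Fin 2) (Fin 2) ℂ)
    (hT : Tmat = ∑ j, A j ⊗ₖ (B j ⊗ₖ C j)) : False := by
  classical
  -- entrywise form of the decomposition
  have KEY : ∀ a b c : Fin 2 × Fin 2,
      Tmat (a.1, b.1, c.1) (a.2, b.2, c.2)
        = ∑ j, A j a.1 a.2 * (B j b.1 b.2 * C j c.1 c.2) := by
    intro a b c
    rw [hT]
    simp [Matrix.sum_apply, Matrix.kroneckerMap_apply]
  -- Step 1: find j1 with B j1 0 0 ≠ 0, using entry t[(1,0),(0,0),(0,1)] = 1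
  have hstep1 : ∃ j1, B j1 0 0 ≠ 0 := by
    by_contra hall
    push_neg at hall
    have h := KEY (1, 0) (0, 0) (0, 1)
    have hval : Tmat (((1 : Fin 2), 0, 0) : Fin 2 × Fin 2 × Fin 2) (0, 0, 1) = 1 := by
      norm_num [Tmat, S0, S1, S2, S3, Matrix.kroneckerMap_apply, Matrix.add_apply]
    rw [hval] at h
    simp [hall] at h
  obtain ⟨j1, hp⟩ := hstep1
  -- Step 2: find j2 with gg B j1 j2 (0,1) ≠ 0,
  -- using entries t[(1,0),(0,1),(1,1)] = 1 and t[(1,0),(0,0),(1,1)] = 0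
  have hstep2 : ∃ j2, gg B j1 j2 (0, 1) ≠ 0 := by
    by_contra hall
    push_neg at hall
    have h1 := KEY (1, 0) (0, 1) (1, 1)
    have h0 := KEY (1, 0) (0, 0) (1, 1)
    have hv1 : Tmat (((1 : Fin 2), 0, 1) : Fin 2 × Fin 2 × Fin 2) (0, 1, 1) = 1 := by
      norm_num [Tmat, S0, S1, S2, S3, Matrix.kroneckerMap_apply, Matrix.add_apply]
    have hv0 : Tmat (((1 : Fin 2), 0, 1) : Fin 2 × Fin 2 × Fin 2) (0, 0, 1) = 0 := by
      norm_num [Tmat, S0, S1, S2, S3, Matrix.kroneckerMap_apply, Matrix.add_apply]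
    rw [hv1] at h1; rw [hv0] at h0
    -- combine: B j1 0 0 * 1 - B j1 0 1 * 0 = ∑ j, A * gg * C = 0
    have hcomb : B j1 0 0 * (1 : ℂ) - B j1 0 1 * (0 : ℂ)
        = ∑ j, A j 1 0 * (gg B j1 j (0, 1) * C j 1 1) := by
      rw [h1, h0, Finset.mul_sum, Finset.mul_sum, ← Finset.sum_sub_distrib]
      refine Finset.sum_congr rfl fun j _ => ?_
      simp only [gg]
      ring
    simp only [hall, mul_zero, zero_mul, Finset.sum_const_zero] at hcomb
    simp at hcomb
    exact hp hcomb
  obtain ⟨j2, hq⟩ := hstep2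
  have hgj1 : ∀ b, gg B j1 j1 b = 0 := fun b => sub_self _
  have hj21 : j2 ≠ j1 := fun h => hq (h ▸ hgj1 (0, 1))
  have hhj1 : ∀ b, hh B j1 j2 j1 b = 0 := by
    intro b; simp [hh, hgj1]
  have hhj2 : ∀ b, hh B j1 j2 j2 b = 0 := fun b => sub_self _
  -- the expansion identity for the doubly-reduced tensor
  have expand : ∀ a b c : Fin 2 × Fin 2,
      ∑ j, (A j a.1 a.2 * hh B j1 j2 j b) * C j c.1 c.2
        = gg B j1 j2 (0, 1) *
            (B j1 0 0 * Tmat (a.1, b.1, c.1) (a.2, b.2, c.2)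
              - B j1 b.1 b.2 * Tmat (a.1, 0, c.1) (a.2, 0, c.2))
          - gg B j1 j2 b *
            (B j1 0 0 * Tmat (a.1, 0, c.1) (a.2, 1, c.2)
              - B j1 0 1 * Tmat (a.1, 0, c.1) (a.2, 0, c.2)) := by
    intro a b c
    have k1 := KEY a b c
    have k2 := KEY a (0, 0) c
    have k3 := KEY a (0, 1) c
    simp only at k1 k2 k3
    rw [k1, k2, k3]
    simp only [Finset.mul_sum, ← Finset.sum_sub_distrib]
    refine Finset.sum_congr rfl fun j _ => ?_
    simp only [hh, gg]
    ring
  -- the four row identities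
  have hrow : ∀ a b c₀ : Fin 2 × Fin 2,
      (∀ c : Fin 2 × Fin 2,
        gg B j1 j2 (0, 1) *
            (B j1 0 0 * Tmat (a.1, b.1, c.1) (a.2, b.2, c.2)
              - B j1 b.1 b.2 * Tmat (a.1, 0, c.1) (a.2, 0, c.2))
          - gg B j1 j2 b *
            (B j1 0 0 * Tmat (a.1, 0, c.1) (a.2, 1, c.2)
              - B j1 0 1 * Tmat (a.1, 0, c.1) (a.2, 0, c.2))
          = gg B j1 j2 (0, 1) * B j1 0 0 * (if c = c₀ then 1 else 0)) →
      (fun c : Fin 2 × Fin 2 => ∑ j, (A j a.1 a.2 * hh B j1 j2 j b) * C j c.1 c.2)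
        = (gg B j1 j2 (0, 1) * B j1 0 0) • (Pi.single c₀ 1 : (Fin 2 × Fin 2) → ℂ) := by
    intro a b c₀ hcalc
    funext c
    rw [expand a b c, hcalc c]
    simp [Pi.single_apply]
  -- the three surviving C-vectors
  obtain ⟨i2, hi2⟩ := Fin.exists_succAbove_eq hj21
  set emb : Fin 3 → Fin 5 := fun l => j1.succAbove (i2.succAbove l) with hemb
  set N : Matrix (Fin 2 × Fin 2) (Fin 3) ℂ := Matrix.of fun c l => C (emb l) c.1 c.2 with hN
  have hsum : ∀ coeff : Fin 5 → ℂ, coeff j1 = 0 → coeff j2 = 0 →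
      (fun c : Fin 2 × Fin 2 => ∑ j, coeff j * C j c.1 c.2)
        = N.mulVecLin (fun l => coeff (emb l)) := by
    intro coeff h1 h2
    funext c
    have e1 : ∑ j, coeff j * C j c.1 c.2
        = coeff j1 * C j1 c.1 c.2
          + ∑ i : Fin 4, coeff (j1.succAbove i) * C (j1.succAbove i) c.1 c.2 :=
      Fin.sum_univ_succAbove _ j1
    have e2 : ∑ i : Fin 4, coeff (j1.succAbove i) * C (j1.succAbove i) c.1 c.2
        = coeff (j1.succAbove i2) * C (j1.succAbove i2) c.1 c.2
          + ∑ l : Fin 3, coeff (emb l) * C (emb l) c.1 c.2 :=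
      Fin.sum_univ_succAbove _ i2
    simp only [e1, e2, h1, hi2, h2, zero_mul, zero_add]
    simp [hN, Matrix.mulVecLin_apply, Matrix.mulVec, dotProduct, mul_comm]
  have key4 : ∀ a b c₀ : Fin 2 × Fin 2,
      (∀ c : Fin 2 × Fin 2,
        gg B j1 j2 (0, 1) *
            (B j1 0 0 * Tmat (a.1, b.1, c.1) (a.2, b.2, c.2)
              - B j1 b.1 b.2 * Tmat (a.1, 0, c.1) (a.2, 0, c.2))
          - gg B j1 j2 b *
            (B j1 0 0 * Tmat (a.1, 0, c.1) (a.2, 1, c.2)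
              - B j1 0 1 * Tmat (a.1, 0, c.1) (a.2, 0, c.2))
          = gg B j1 j2 (0, 1) * B j1 0 0 * (if c = c₀ then 1 else 0)) →
      (Pi.single c₀ 1 : (Fin 2 × Fin 2) → ℂ) ∈ LinearMap.range N.mulVecLin := by
    intro a b c₀ hc
    have hr := hrow a b c₀ hc
    have hz1 : A j1 a.1 a.2 * hh B j1 j2 j1 b = 0 := by simp [hhj1]
    have hz2 : A j2 a.1 a.2 * hh B j1 j2 j2 b = 0 := by simp [hhj2]
    have hml : (gg B j1 j2 (0, 1) * B j1 0 0) • (Pi.single c₀ 1 : (Fin 2 × Fin 2) → ℂ)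
        = N.mulVecLin (fun l => A (emb l) a.1 a.2 * hh B j1 j2 (emb l) b) :=
      hr.symm.trans (hsum (fun j => A j a.1 a.2 * hh B j1 j2 j b) hz1 hz2)
    have hmem : (gg B j1 j2 (0, 1) * B j1 0 0) • (Pi.single c₀ 1 : (Fin 2 × Fin 2) → ℂ)
        ∈ LinearMap.range N.mulVecLin := ⟨_, hml.symm⟩
    have hne : gg B j1 j2 (0, 1) * B j1 0 0 ≠ 0 := mul_ne_zero hq hp
    have := Submodule.smul_mem (LinearMap.range N.mulVecLin)
      (gg B j1 j2 (0, 1) * B j1 0 0)⁻¹ hmem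
    rwa [smul_smul, inv_mul_cancel₀ hne, one_smul] at this
  have hsingle : ∀ c₀ : Fin 2 × Fin 2,
      (Pi.single c₀ 1 : (Fin 2 × Fin 2) → ℂ) ∈ LinearMap.range N.mulVecLin := by
    have t1 := key4 (0, 1) (1, 1) (0, 0) ?h1
    have t2 := key4 (1, 1) (1, 0) (0, 1) ?h2
    have t3 := key4 (0, 1) (1, 0) (1, 0) ?h3
    have t4 := key4 (1, 1) (1, 1) (1, 1) ?h4
    case h1 =>
      rintro ⟨c1, c2⟩
      fin_cases c1 <;> fin_cases c2 <;>
        · norm_num [Tmat, S0, S1, S2, S3, Matrix.kroneckerMap_apply, Matrix.add_apply,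
            Prod.ext_iff, Fin.ext_iff]
          try ring
    case h2 =>
      rintro ⟨c1, c2⟩
      fin_cases c1 <;> fin_cases c2 <;>
        · norm_num [Tmat, S0, S1, S2, S3, Matrix.kroneckerMap_apply, Matrix.add_apply,
            Prod.ext_iff, Fin.ext_iff]
          try ring
    case h3 =>
      rintro ⟨c1, c2⟩
      fin_cases c1 <;> fin_cases c2 <;>
        · norm_num [Tmat, S0, S1, S2, S3, Matrix.kroneckerMap_apply, Matrix.add_apply,
            Prod.ext_iff, Fin.ext_iff]
          try ring
    case h4 =>
      rintro ⟨c1, c2⟩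
      fin_cases c1 <;> fin_cases c2 <;>
        · norm_num [Tmat, S0, S1, S2, S3, Matrix.kroneckerMap_apply, Matrix.add_apply,
            Prod.ext_iff, Fin.ext_iff]
          try ring
    intro c₀
    fin_cases c₀
    · exact t1
    · exact t2
    · exact t3
    · exact t4
  have htop : (⊤ : Submodule ℂ ((Fin 2 × Fin 2) → ℂ)) ≤ LinearMap.range N.mulVecLin := by
    rw [← (Pi.basisFun ℂ (Fin 2 × Fin 2)).span_eq, Submodule.span_le]
    rintro x ⟨c₀, rfl⟩
    rw [Pi.basisFun_apply]
    exact hsingle c₀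
  have e1 : LinearMap.range N.mulVecLin = ⊤ := top_le_iff.mp htop
  have e2 := LinearMap.finrank_range_le N.mulVecLin
  rw [e1, finrank_top, Module.finrank_pi, Module.finrank_pi] at e2
  simp at e2


theorem stmt8 : sr Tmat = 6 := by
  have mem6 : 6 ∈ {r | ∃ A B C : Fin r → Matrix (Fin 2) (Fin 2) ℂ,
      Tmat = ∑ j, A j ⊗ₖ (B j ⊗ₖ C j)} := by
    refine ⟨![S1, S2, S3, S1, S2, S3], ![S3, S0, S2, S2, S1, S3],
      ![S0, S1, S1, S2, S3, S3], ?_⟩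
    simp only [Tmat, Fin.sum_univ_six]
    rfl
  have hlow : ∀ r ∈ {r | ∃ A B C : Fin r → Matrix (Fin 2) (Fin 2) ℂ,
      Tmat = ∑ j, A j ⊗ₖ (B j ⊗ₖ C j)}, 6 ≤ r := by
    rintro r ⟨A, B, C, hr⟩
    by_contra hlt
    push_neg at hlt
    have hr5 : r ≤ 5 := Nat.lt_succ_iff.mp hlt
    set G : ℕ → Matrix (Fin 2 × Fin 2 × Fin 2) (Fin 2 × Fin 2 × Fin 2) ℂ :=
      fun n => if h : n < r then A ⟨n, h⟩ ⊗ₖ (B ⟨n, h⟩ ⊗ₖ C ⟨n, h⟩) else 0 with hG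
    have h5 : Tmat = ∑ j : Fin 5,
        (fun j : Fin 5 => if h : (j : ℕ) < r then A ⟨j, h⟩ else 0) j ⊗ₖ
          ((fun j : Fin 5 => if h : (j : ℕ) < r then B ⟨j, h⟩ else 0) j ⊗ₖ
            (fun j : Fin 5 => if h : (j : ℕ) < r then C ⟨j, h⟩ else 0) j) := by
      have step1 : ∀ j : Fin 5,
          (fun j : Fin 5 => if h : (j : ℕ) < r then A ⟨j, h⟩ else 0) j ⊗ₖ
            ((fun j : Fin 5 => if h : (j : ℕ) < r then B ⟨j, h⟩ else 0) j ⊗ₖ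
              (fun j : Fin 5 => if h : (j : ℕ) < r then C ⟨j, h⟩ else 0) j) = G (j : ℕ) := by
        intro j
        by_cases h : (j : ℕ) < r
        · simp [hG, h]
        · simp [hG, h, Matrix.zero_kronecker]
      rw [Finset.sum_congr rfl fun j _ => step1 j]
      have e1 : ∑ j : Fin 5, G (j : ℕ) = ∑ n ∈ Finset.range 5, G n :=
        Fin.sum_univ_eq_sum_range G 5
      have e2 : ∑ i : Fin r, A i ⊗ₖ (B i ⊗ₖ C i) = ∑ n ∈ Finset.range r, G n := by
        rw [← Fin.sum_univ_eq_sum_range G r]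
        refine Finset.sum_congr rfl fun i _ => ?_
        simp [hG, i.isLt]
      have e3 : ∑ n ∈ Finset.range r, G n = ∑ n ∈ Finset.range 5, G n := by
        refine Finset.sum_subset (Finset.range_subset_range.mpr hr5) fun n _ hn => ?_
        simp only [Finset.mem_range, not_lt] at hn
        simp [hG, Nat.not_lt.mpr hn]
      rw [e1, ← e3, ← e2, hr]
    exact core _ _ _ h5
  exact le_antisymm (Nat.sInf_le mem6) (le_csInf ⟨6, mem6⟩ hlow)
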